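/- If v and w both belong to a δ-clean cluster C' in a clustering, then w is 3δ-good with respect to N^+(v). -/
import Mathlib


attribute [local instance] Classical.propDecidable

/-- `N⁺(v)`: the vertex `v` together with all vertices joined to it by a positive edge. -/
def Nplus {V : Type*} [Fintype V] [DecidableEq V] (pos : V → V → Bool) (v : V) : Finset V :=
  insert v (Finset.univ.filter (fun u => pos u v = true))

/-- `v` is `δ`-good with respect to `C`. -/
def IsGood {V : Type*} [Fintype V] [DecidableEq V]
    (pos : V → V → Bool) (δ : ℝ) (v : V) (C : Finset V) : Prop :=
  (1 - δ) * (C.card : ℝ) ≤ ((Nplus pos v ∩ C).card : ℝ) ∧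
  ((Nplus pos v ∩ Cᶜ).card : ℝ) ≤ δ * (C.card : ℝ)

/-- `C` is `δ`-clean if every vertex of `C` is `δ`-good with respect to `C`. -/
def IsClean {V : Type*} [Fintype V] [DecidableEq V]
    (pos : V → V → Bool) (δ : ℝ) (C : Finset V) : Prop :=
  ∀ v ∈ C, IsGood pos δ v C

/-- If `v` and `w` both belong to a `δ`-clean cluster `C'`, then `w` is `3δ`-good
with respect to `N⁺(v)`. -/
theorem good_wrt_Nplus {V : Type*} [Fintype V] [DecidableEq V]
    (pos : V → V → Bool) (hsym : ∀ u v, pos u v = pos v u)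
    (δ : ℝ) (hδ : δ ≤ 1/4)
    (C' : Finset V) (hclean : IsClean pos δ C')
    (v w : V) (hv : v ∈ C') (hw : w ∈ C') :
    IsGood pos (3 * δ) w (Nplus pos v) := by
  obtain ⟨hv1, hv2⟩ := hclean v hv
  obtain ⟨hw1, hw2⟩ := hclean w hw
  set N := Nplus pos v with hNdef
  set A := Nplus pos w with hAdef
  have hc0 : (0:ℝ) < C'.card := by
    exact_mod_cast Finset.card_pos.mpr ⟨v, hv⟩
  have hNCle : ((N ∩ C').card : ℝ) ≤ C'.card := by
    exact_mod_cast Finset.card_le_card (Finset.inter_subset_right)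
  have hδ0 : 0 ≤ δ := by nlinarith
  -- decomposition of N
  have hsplitN : ((N ∩ C').card : ℝ) + ((N ∩ C'ᶜ).card : ℝ) = N.card := by
    have := Finset.card_inter_add_card_sdiff N C'
    rw [sdiff_eq] at this
    exact_mod_cast this
  have hsplitA : ((A ∩ C').card : ℝ) + ((A ∩ C'ᶜ).card : ℝ) = A.card := by
    have := Finset.card_inter_add_card_sdiff A C'
    rw [sdiff_eq] at this
    exact_mod_cast this
  -- |A∩C| + |N∩C| ≤ |C| + |A∩N∩C|
  have h1 : ((A ∩ C').card : ℝ) + ((N ∩ C').card : ℝ)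
      ≤ (C'.card : ℝ) + ((A ∩ N ∩ C').card : ℝ) := by
    have he := Finset.card_union_add_card_inter (A ∩ C') (N ∩ C')
    have hsub : ((A ∩ C') ∪ (N ∩ C')).card ≤ C'.card :=
      Finset.card_le_card (Finset.union_subset
        Finset.inter_subset_right Finset.inter_subset_right)
    have heq : (A ∩ C') ∩ (N ∩ C') = A ∩ N ∩ C' := by
      ext x; simp only [Finset.mem_inter]; tauto
    rw [heq] at he
    have : (A ∩ C').card + (N ∩ C').card ≤ C'.card + (A ∩ N ∩ C').card := by omega
    exact_mod_cast this
  have h2 : ((A ∩ N ∩ C').card : ℝ) ≤ ((A ∩ N).card : ℝ) := by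
    exact_mod_cast Finset.card_le_card (Finset.inter_subset_left)
  -- |A∩N| + |A∩Nᶜ| = |A|
  have h3 : ((A ∩ N).card : ℝ) + ((A ∩ Nᶜ).card : ℝ) = A.card := by
    have := Finset.card_inter_add_card_sdiff A N
    rw [sdiff_eq] at this
    exact_mod_cast this
  -- |A∩Nᶜ| split over C'
  have h4 : ((A ∩ Nᶜ ∩ C').card : ℝ) + ((A ∩ Nᶜ ∩ C'ᶜ).card : ℝ) = (A ∩ Nᶜ).card := by
    have := Finset.card_inter_add_card_sdiff (A ∩ Nᶜ) C'
    rw [sdiff_eq] at this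
    exact_mod_cast this
  have h5 : ((A ∩ Nᶜ ∩ C'ᶜ).card : ℝ) ≤ ((A ∩ C'ᶜ).card : ℝ) := by
    have : A ∩ Nᶜ ∩ C'ᶜ ⊆ A ∩ C'ᶜ := by
      intro x hx
      simp only [Finset.mem_inter] at hx ⊢
      tauto
    exact_mod_cast Finset.card_le_card this
  have h6 : ((A ∩ Nᶜ ∩ C').card : ℝ) + ((N ∩ C').card : ℝ) ≤ (C'.card : ℝ) := by
    have hsub : A ∩ Nᶜ ∩ C' ⊆ C' \ (N ∩ C') := by
      intro x hx
      simp only [Finset.mem_inter, Finset.mem_sdiff, Finset.mem_compl] at hx ⊢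
      tauto
    have h := Finset.card_le_card hsub
    have h' := Finset.card_sdiff_add_card_eq_card (Finset.inter_subset_right : N ∩ C' ⊆ C')
    have : (A ∩ Nᶜ ∩ C').card + (N ∩ C').card ≤ C'.card := by omega
    exact_mod_cast this
  -- bounds on |N|
  have hNub : (N.card : ℝ) ≤ (1 + δ) * C'.card := by linarith
  have hNlb : (1 - δ) * C'.card ≤ (N.card : ℝ) := by
    have h0 : (0:ℝ) ≤ ((N ∩ C'ᶜ).card : ℝ) := by positivity
    linarith
  constructor
  · -- (1 - 3δ)|N| ≤ |A ∩ N|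
    have key : (1 - 2*δ) * C'.card ≤ ((A ∩ N).card : ℝ) := by linarith
    have h7 : (1 - 3*δ) * (N.card : ℝ) ≤ (1 - 3*δ) * ((1 + δ) * C'.card) :=
      mul_le_mul_of_nonneg_left hNub (by linarith)
    have hsq : (0:ℝ) ≤ δ * δ * C'.card := mul_nonneg (mul_nonneg hδ0 hδ0) hc0.le
    linarith [h7, key, hsq]
  · -- |A ∩ Nᶜ| ≤ 3δ|N|
    have key : ((A ∩ Nᶜ).card : ℝ) ≤ 2 * δ * C'.card := by linarith
    have h8 : (3*δ) * ((1 - δ) * C'.card) ≤ (3*δ) * (N.card : ℝ) :=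
      mul_le_mul_of_nonneg_left hNlb (by linarith)
    have hpr : (0:ℝ) ≤ δ * (1 - 3*δ) * C'.card :=
      mul_nonneg (mul_nonneg hδ0 (by linarith)) hc0.le
    linarith [h8, key, hpr]
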